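/- Let G be a locally compact group and let H be a group of automorphisms of G. Then the action of H on the coset space G/Res_G(H) is distal, where Res_G(H) is the discrete residual of H, i.e. the intersection of all open H-invariant subgroups of G. -/

import Mathlib

open Topology Pointwise

/-- The discrete residual of a group `H` of automorphisms of `G`: the intersection of all
open `H`-invariant subgroups of `G`. -/
def discreteResidual {G : Type*} [Group G] [TopologicalSpace G]
    (H : Subgroup (MulAut G)) : Subgroup G :=
  sInf {O : Subgroup G | IsOpen (O : Set G) ∧ ∀ h ∈ H, ⇑h '' (O : Set G) = (O : Set G)}

/-- Let `G` be a locally compact group and `H` a group of automorphisms of `G`.  Then the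
action of `H` on the coset space `G / Res_G(H)` is distal: for distinct cosets `xR ≠ yR`
there is no net `(h_i)` in `H` with `h_i • xR` and `h_i • yR` converging to a common coset
(equivalently, no diagonal point `(z, z)` lies in the closure of the set of pairs
`(h(x)R, h(y)R)` for `h ∈ H`). -/
theorem distal_on_quotient_by_discreteResidual {G : Type*} [Group G] [TopologicalSpace G]
    [IsTopologicalGroup G] [LocallyCompactSpace G] (H : Subgroup (MulAut G))
    (hcont : ∀ h ∈ H, Continuous ⇑h) :
    ∀ x y : G, (QuotientGroup.mk x : G ⧸ discreteResidual H) ≠ QuotientGroup.mk y →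
      ¬ ∃ z : G ⧸ discreteResidual H, (z, z) ∈ closure
        {p : (G ⧸ discreteResidual H) × (G ⧸ discreteResidual H) |
          ∃ h ∈ H, p = (QuotientGroup.mk (h x), QuotientGroup.mk (h y))} := by
  intro x y hxy
  rintro ⟨z, hz⟩
  -- `x⁻¹ * y` is not in the discrete residual
  have hne : x⁻¹ * y ∉ discreteResidual H := fun hmem => hxy (QuotientGroup.eq.mpr hmem)
  -- hence there is an open `H`-invariant subgroup `O` avoiding `x⁻¹ * y`
  have hno : ¬ ∀ O ∈ {O : Subgroup G | IsOpen (O : Set G) ∧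
      ∀ h ∈ H, ⇑h '' (O : Set G) = (O : Set G)}, x⁻¹ * y ∈ O := by
    intro hall
    exact hne (Subgroup.mem_sInf.mpr hall)
  push_neg at hno
  obtain ⟨O, ⟨hOopen, hOinv⟩, hxyO⟩ := hno
  -- the residual is contained in `O`
  have hRO : discreteResidual H ≤ O := sInf_le ⟨hOopen, hOinv⟩
  obtain ⟨z₀, rfl⟩ := QuotientGroup.mk_surjective z
  -- the open neighborhood `z₀ O / R` of `z`
  set U : Set (G ⧸ discreteResidual H) := QuotientGroup.mk '' (z₀ • (O : Set G)) with hU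
  have hUopen : IsOpen U := QuotientGroup.isOpenMap_coe _ (hOopen.smul z₀)
  have hzU : (QuotientGroup.mk z₀ : G ⧸ discreteResidual H) ∈ U :=
    ⟨z₀ * 1, ⟨1, O.one_mem, rfl⟩, by simp⟩
  -- key: membership in `U` means `z₀⁻¹ * w ∈ O`
  have hUmem : ∀ w : G, (QuotientGroup.mk w : G ⧸ discreteResidual H) ∈ U → z₀⁻¹ * w ∈ O := by
    intro w hw
    obtain ⟨g, ⟨o, hoO, rfl⟩, hg⟩ := hw
    have : (z₀ * o)⁻¹ * w ∈ discreteResidual H := QuotientGroup.eq.mp hg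
    have h2 : (z₀ * o)⁻¹ * w ∈ O := hRO this
    have : z₀⁻¹ * w = o * ((z₀ * o)⁻¹ * w) := by group
    rw [this]
    exact O.mul_mem hoO h2
  -- use the closure hypothesis with the open neighborhood `U ×ˢ U`
  have hmeets := (mem_closure_iff.mp hz) (U ×ˢ U) (hUopen.prod hUopen) ⟨hzU, hzU⟩
  obtain ⟨p, hpU, h, hH, hp⟩ := hmeets
  subst hp
  have hx' : z₀⁻¹ * h x ∈ O := hUmem _ hpU.1
  have hy' : z₀⁻¹ * h y ∈ O := hUmem _ hpU.2
  have hO : h (x⁻¹ * y) ∈ O := by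
    have : h (x⁻¹ * y) = (z₀⁻¹ * h x)⁻¹ * (z₀⁻¹ * h y) := by
      rw [map_mul, map_inv]; group
    rw [this]
    exact O.mul_mem (O.inv_mem hx') hy'
  -- invariance gives `x⁻¹ * y ∈ O`, a contradiction
  have : x⁻¹ * y ∈ O := by
    have hO' : h (x⁻¹ * y) ∈ ⇑h '' (O : Set G) := by rw [hOinv h hH]; exact hO
    obtain ⟨o, hoO, ho⟩ := hO'
    have : o = x⁻¹ * y := h.injective ho
    rwa [← this]
  exact hxyO this
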